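/- Let k be a field of characteristic zero and n = 2r with r ≥ 1. Let Q be the bilinear form on k^n with matrix having ±1 on the antidiagonal and zeros elsewhere, making k^n a symplectic space, and let U = Sp(Q) ∩ (upper unitriangular matrices), a maximal unipotent subgroup of Sp_n. Then for any l ≥ 1 and any k with r < k ≤ min(l, n), every lower minor determinant of order k of the n × l coordinate matrix B of a tuple (v₁,…,v_l) ∈ (k^n)^l is a polynomial in the functions Q(v_i, v_j) (i < j) and the lower minor determinants of orders ≤ r. -/

import Mathlib

/-- The symplectic form on `k^{2r}` with matrix having `±1` on the antidiagonal. -/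
def sympForm (k : Type*) [Field k] (r : ℕ) (x y : Fin (2 * r) → k) : k :=
  ∑ a : Fin (2 * r), ∑ b : Fin (2 * r),
    x a * (if (a : ℕ) + (b : ℕ) = 2 * r - 1 then
      (if (a : ℕ) < (b : ℕ) then (1 : k) else -1) else 0) * y b

/-- The lower minor of order `d` of the `2r × l` matrix whose columns are
`v₁,…,v_l`, on the columns selected by `cs`. -/
def lowerMinor (k : Type*) [Field k] (r l d : ℕ) (hd : d ≤ 2 * r)
    (cs : Fin d → Fin l) (v : Fin l → Fin (2 * r) → k) : k :=
  Matrix.det (Matrix.of fun x y : Fin d =>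
    v (cs y) ⟨2 * r - d + (x : ℕ), by have := x.isLt; omega⟩)

namespace Stmt13Aux

/-- the symplectic partner index -/
def pr (r : ℕ) (a : Fin (2 * r)) : Fin (2 * r) :=
  ⟨2 * r - 1 - (a : ℕ), by have := a.isLt; omega⟩

/-- the sign of the pairing at level `a` -/
def sg (k : Type*) [Field k] (r : ℕ) (a : Fin (2 * r)) : k :=
  if (a : ℕ) < 2 * r - 1 - (a : ℕ) then 1 else -1

lemma pr_pr (r : ℕ) (a : Fin (2 * r)) : pr r (pr r a) = a := by
  have := a.isLt
  exact Fin.ext (show 2*r-1-(2*r-1-(a:ℕ)) = a by omega)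

lemma sg_pr (k : Type*) [Field k] (r : ℕ) (a : Fin (2 * r)) :
    sg k r (pr r a) = - sg k r a := by
  have ha := a.isLt
  have hv : ((pr r a) : ℕ) = 2 * r - 1 - (a : ℕ) := rfl
  unfold sg
  rw [hv]
  rcases Nat.lt_or_ge (a : ℕ) (2 * r - 1 - (a : ℕ)) with h | h
  · have c1 : ¬(2 * r - 1 - (a:ℕ) < 2 * r - 1 - (2 * r - 1 - (a:ℕ))) := by omega
    rw [if_neg c1, if_pos h]
  · have hne : (a : ℕ) ≠ 2 * r - 1 - (a:ℕ) := by omega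
    have c1 : 2 * r - 1 - (a:ℕ) < 2 * r - 1 - (2 * r - 1 - (a:ℕ)) := by omega
    have c2 : ¬((a:ℕ) < 2 * r - 1 - (a:ℕ)) := by omega
    rw [if_pos c1, if_neg c2, neg_neg]

lemma sympForm_eq (k : Type*) [Field k] (r : ℕ) (x y : Fin (2 * r) → k) :
    sympForm k r x y = ∑ a : Fin (2 * r), x a * sg k r a * y (pr r a) := by
  unfold sympForm
  refine Finset.sum_congr rfl fun a _ => ?_
  have ha := a.isLt
  have hv : ((pr r a) : ℕ) = 2 * r - 1 - (a : ℕ) := rfl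
  rw [Finset.sum_eq_single_of_mem (pr r a) (Finset.mem_univ _) ?_]
  · have c : (a:ℕ) + ((pr r a : Fin (2*r)) : ℕ) = 2 * r - 1 := by rw [hv]; omega
    rw [if_pos c, hv]
    rfl
  · intro b _ hb
    rw [if_neg, mul_zero, zero_mul]
    intro hab
    exact hb (Fin.ext (show (b:ℕ) = 2*r-1-(a:ℕ) by omega))

def prPerm (r : ℕ) : Equiv.Perm (Fin (2 * r)) := ⟨pr r, pr r, pr_pr r, pr_pr r⟩

lemma sympForm_swap (k : Type*) [Field k] (r : ℕ) (x y : Fin (2 * r) → k) :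
    sympForm k r x y = - sympForm k r y x := by
  rw [sympForm_eq, sympForm_eq]
  have h1 : ∑ a : Fin (2*r), x a * sg k r a * y (pr r a)
      = ∑ a : Fin (2*r), x (prPerm r a) * sg k r (prPerm r a) * y (pr r (prPerm r a)) :=
    (Equiv.sum_comp (prPerm r) fun a => x a * sg k r a * y (pr r a)).symm
  rw [h1, ← Finset.sum_neg_distrib]
  refine Finset.sum_congr rfl fun a _ => ?_
  show x (pr r a) * sg k r (pr r a) * y (pr r (pr r a)) = _
  rw [pr_pr, sg_pr]
  ring


def XiF (s m : ℕ) : (Fin s × Fin 2) ⊕ Fin m → Fin (2 * s + m)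
  | Sum.inl it =>
      if it.2 = (0 : Fin 2) then ⟨(it.1 : ℕ), by have := it.1.isLt; omega⟩
      else ⟨2 * s - 1 - (it.1 : ℕ), by have := it.1.isLt; omega⟩
  | Sum.inr j => ⟨2 * s + (j : ℕ), by have := j.isLt; omega⟩

lemma XiF_inl0 (s m : ℕ) (i : Fin s) :
    XiF s m (Sum.inl (i, 0)) = ⟨(i : ℕ), by have := i.isLt; omega⟩ := by
  simp [XiF]

lemma XiF_inl1 (s m : ℕ) (i : Fin s) :
    XiF s m (Sum.inl (i, 1)) = ⟨2 * s - 1 - (i : ℕ), by have := i.isLt; omega⟩ := by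
  simp [XiF]

lemma XiF_inr (s m : ℕ) (j : Fin m) :
    XiF s m (Sum.inr j) = ⟨2 * s + (j : ℕ), by have := j.isLt; omega⟩ := rfl

def XiI (s m : ℕ) (x : Fin (2 * s + m)) : (Fin s × Fin 2) ⊕ Fin m :=
  if h : (x : ℕ) < s then Sum.inl (⟨(x : ℕ), h⟩, 0)
  else if h2 : (x : ℕ) < 2 * s then Sum.inl (⟨2 * s - 1 - (x : ℕ), by omega⟩, 1)
  else Sum.inr ⟨(x : ℕ) - 2 * s, by have := x.isLt; omega⟩

lemma fin2_cases (t : Fin 2) : t = 0 ∨ t = 1 := by omega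

/-- the common slot/level layout -/
def Xi (s m : ℕ) : (Fin s × Fin 2) ⊕ Fin m ≃ Fin (2 * s + m) where
  toFun := XiF s m
  invFun := XiI s m
  left_inv := by
    rintro (⟨i, t⟩ | j)
    · have hi := i.isLt
      rcases fin2_cases t with rfl | rfl
      · rw [XiF_inl0]
        unfold XiI
        rw [dif_pos (show (i : ℕ) < s from hi)]
      · rw [XiF_inl1]
        unfold XiI
        have c1 : ¬(2 * s - 1 - (i : ℕ) < s) := by omega
        have c2 : 2 * s - 1 - (i : ℕ) < 2 * s := by omega
        rw [dif_neg c1, dif_pos c2]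
        congr 2
        exact Fin.ext (by simp; omega)
    · have hj := j.isLt
      rw [XiF_inr]
      unfold XiI
      have c1 : ¬(2 * s + (j : ℕ) < s) := by omega
      have c2 : ¬(2 * s + (j : ℕ) < 2 * s) := by omega
      rw [dif_neg c1, dif_neg c2]
      congr 1
      exact Fin.ext (by simp)
  right_inv := by
    intro x
    have hx := x.isLt
    unfold XiI
    by_cases h : (x : ℕ) < s
    · rw [dif_pos h, XiF_inl0]
    · rw [dif_neg h]
      by_cases h2 : (x : ℕ) < 2 * s
      · rw [dif_pos h2, XiF_inl1]
        exact Fin.ext (by simp; omega)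
      · rw [dif_neg h2, XiF_inr]
        exact Fin.ext (by simp; omega)



variable {k : Type*} [Field k]

def slL (s m : ℕ) (i : Fin s) : Fin (2*s+m) := Xi s m (Sum.inl (i, 0))
def slR (s m : ℕ) (i : Fin s) : Fin (2*s+m) := Xi s m (Sum.inl (i, 1))
def slE (s m : ℕ) (j : Fin m) : Fin (2*s+m) := Xi s m (Sum.inr j)

def lv (s m : ℕ) (x : Fin (2*s+m)) : Fin (2*(m+s)) :=
  ⟨m + (x : ℕ), by have := x.isLt; omega⟩
def lvE (s m : ℕ) (x : Fin m) : Fin (2*(m+s)) :=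
  ⟨2*s+m+(x : ℕ), by have := x.isLt; omega⟩

def hh (s m : ℕ) (f : Fin s → Fin (2*(m+s))) (τ : Equiv.Perm (Fin m))
    (x : Fin (2*s+m)) : Fin (2*(m+s)) :=
  Sum.elim (fun it : Fin s × Fin 2 => if it.2 = 0 then f it.1 else pr (m+s) (f it.1))
    (fun j : Fin m => lvE s m (τ j)) ((Xi s m).symm x)

lemma hh_slL (s m : ℕ) (f : Fin s → Fin (2*(m+s))) (τ : Equiv.Perm (Fin m)) (i : Fin s) :
    hh s m f τ (slL s m i) = f i := by
  simp [hh, slL]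

lemma hh_slR (s m : ℕ) (f : Fin s → Fin (2*(m+s))) (τ : Equiv.Perm (Fin m)) (i : Fin s) :
    hh s m f τ (slR s m i) = pr (m+s) (f i) := by
  simp [hh, slR]

lemma hh_slE (s m : ℕ) (f : Fin s → Fin (2*(m+s))) (τ : Equiv.Perm (Fin m)) (j : Fin m) :
    hh s m f τ (slE s m j) = lvE s m (τ j) := by
  simp [hh, slE]

def gP (s : ℕ) (β : Equiv.Perm (Fin s)) (ε : Fin s → Bool) : Equiv.Perm (Fin s × Fin 2) :=
  (Equiv.prodCongrLeft fun _ => β) * (Equiv.prodCongrRight fun i => if ε i then Equiv.swap 0 1 else 1)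

lemma gP_apply (s : ℕ) (β : Equiv.Perm (Fin s)) (ε : Fin s → Bool) (i : Fin s) (t : Fin 2) :
    gP s β ε (i, t) = (β i, if ε i then Equiv.swap 0 1 t else t) := by
  by_cases h : ε i <;>
    simp [gP, Equiv.Perm.mul_apply, Equiv.prodCongrRight, Equiv.prodCongrLeft, h]

lemma sign_gP (s : ℕ) (β : Equiv.Perm (Fin s)) (ε : Fin s → Bool) :
    Equiv.Perm.sign (gP s β ε) = ∏ i : Fin s, if ε i then (-1 : ℤˣ) else 1 := by
  rw [gP, map_mul, Equiv.Perm.sign_prodCongrLeft, Equiv.Perm.sign_prodCongrRight]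
  have h1 : ∏ _t : Fin 2, Equiv.Perm.sign β = 1 := by
    rw [Fin.prod_univ_two]; exact Int.units_mul_self _
  rw [h1, one_mul]
  refine Finset.prod_congr rfl fun i _ => ?_
  by_cases h : ε i <;> simp [h, Equiv.Perm.sign_swap (show (0 : Fin 2) ≠ 1 by decide)]

def fB (s m : ℕ) (β : Equiv.Perm (Fin s)) (ε : Fin s → Bool) (i : Fin s) : Fin (2*(m+s)) :=
  ⟨m + (if ε i then 2*s-1-(β i : ℕ) else (β i : ℕ)), by have := (β i).isLt; split <;> omega⟩

lemma sg_fB (s m : ℕ) (β : Equiv.Perm (Fin s)) (ε : Fin s → Bool) (i : Fin s) :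
    sg k (m+s) (fB s m β ε i) = if ε i then (-1 : k) else 1 := by
  have hb := (β i).isLt
  by_cases h : ε i
  · have hval : ((fB s m β ε i) : ℕ) = m + (2*s-1-(β i : ℕ)) := by simp [fB, h]
    unfold sg
    rw [hval]
    have hc : ¬(m + (2*s-1-(β i : ℕ)) < 2*(m+s)-1-(m + (2*s-1-(β i : ℕ)))) := by omega
    rw [if_neg hc, if_pos h]
  · have hval : ((fB s m β ε i) : ℕ) = m + (β i : ℕ) := by simp [fB, h]
    unfold sg
    rw [hval]
    have hc : m + (β i : ℕ) < 2*(m+s)-1-(m + (β i : ℕ)) := by omega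
    rw [if_pos hc, if_neg h]

def rho (s m : ℕ) (β : Equiv.Perm (Fin s)) (ε : Fin s → Bool) (τ : Equiv.Perm (Fin m)) :
    Equiv.Perm (Fin (2*s+m)) :=
  (Xi s m).permCongr (Equiv.sumCongr (gP s β ε) τ)

lemma hh_good (s m : ℕ) (β : Equiv.Perm (Fin s)) (ε : Fin s → Bool) (τ : Equiv.Perm (Fin m)) :
    hh s m (fB s m β ε) τ = fun x => lv s m (rho s m β ε τ x) := by
  funext x
  obtain ⟨z, rfl⟩ : ∃ z, Xi s m z = x := ⟨(Xi s m).symm x, (Xi s m).apply_symm_apply x⟩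
  have hrho : rho s m β ε τ (Xi s m z) = Xi s m (Equiv.sumCongr (gP s β ε) τ z) := by
    simp [rho, Equiv.permCongr_apply]
  rw [hrho]
  rcases z with ⟨i, t⟩ | j
  · have hb := (β i).isLt
    have hi := i.isLt
    rcases fin2_cases t with rfl | rfl
    · rw [show hh s m (fB s m β ε) τ (Xi s m (Sum.inl (i, 0))) = fB s m β ε i from hh_slL s m _ τ i]
      rw [Equiv.sumCongr_apply, Sum.map_inl, gP_apply]
      by_cases h : ε i
      · rw [if_pos h]
        show fB s m β ε i = lv s m (Xi s m (Sum.inl (β i, 1)))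
        rw [show ((Xi s m) (Sum.inl (β i, 1))) = XiF s m (Sum.inl (β i, 1)) from rfl, XiF_inl1]
        exact Fin.ext (by simp [fB, lv, if_pos h])
      · rw [if_neg h]
        show fB s m β ε i = lv s m (Xi s m (Sum.inl (β i, 0)))
        rw [show ((Xi s m) (Sum.inl (β i, 0))) = XiF s m (Sum.inl (β i, 0)) from rfl, XiF_inl0]
        exact Fin.ext (by simp [fB, lv, if_neg h])
    · rw [show hh s m (fB s m β ε) τ (Xi s m (Sum.inl (i, 1))) = pr (m+s) (fB s m β ε i) from
        hh_slR s m _ τ i]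
      rw [Equiv.sumCongr_apply, Sum.map_inl, gP_apply]
      by_cases h : ε i
      · rw [if_pos h]
        show pr (m+s) (fB s m β ε i) = lv s m (Xi s m (Sum.inl (β i, Equiv.swap 0 1 1)))
        rw [show Equiv.swap (0 : Fin 2) 1 1 = 0 by decide]
        rw [show ((Xi s m) (Sum.inl (β i, 0))) = XiF s m (Sum.inl (β i, 0)) from rfl, XiF_inl0]
        refine Fin.ext ?_
        show 2*(m+s)-1-(m + (if ε i then 2*s-1-(β i : ℕ) else (β i : ℕ))) = m + (β i : ℕ)
        rw [if_pos h]; omega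
      · rw [if_neg h]
        show pr (m+s) (fB s m β ε i) = lv s m (Xi s m (Sum.inl (β i, 1)))
        rw [show ((Xi s m) (Sum.inl (β i, 1))) = XiF s m (Sum.inl (β i, 1)) from rfl, XiF_inl1]
        refine Fin.ext ?_
        show 2*(m+s)-1-(m + (if ε i then 2*s-1-(β i : ℕ) else (β i : ℕ))) = m + (2*s-1-(β i : ℕ))
        rw [if_neg h]; omega
  · have hj := j.isLt
    rw [show hh s m (fB s m β ε) τ (Xi s m (Sum.inr j)) = lvE s m (τ j) from hh_slE s m _ τ j]
    rw [Equiv.sumCongr_apply, Sum.map_inr]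
    rw [show ((Xi s m) (Sum.inr (τ j))) = XiF s m (Sum.inr (τ j)) from rfl, XiF_inr]
    exact Fin.ext (by simp [lvE, lv]; omega)


lemma stepA (s m : ℕ) (w : Fin (2*s+m) → Fin (2*(m+s)) → k) (σ : Equiv.Perm (Fin (2*s+m))) :
    ((Equiv.Perm.sign σ : ℤ) : k) *
      ((∏ i : Fin s, sympForm k (m+s) (w (σ (slL s m i))) (w (σ (slR s m i)))) *
       (Matrix.of fun x y : Fin m => w (σ (slE s m y)) (lvE s m x)).det)
    = ∑ f : Fin s → Fin (2*(m+s)), ∑ τ : Equiv.Perm (Fin m),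
        ((∏ i : Fin s, sg k (m+s) (f i)) * ((Equiv.Perm.sign τ : ℤ) : k)) *
          (((Equiv.Perm.sign σ : ℤ) : k) * ∏ x : Fin (2*s+m), w (σ x) (hh s m f τ x)) := by
  have hQ : (∏ i : Fin s, sympForm k (m+s) (w (σ (slL s m i))) (w (σ (slR s m i))))
      = ∑ f : Fin s → Fin (2*(m+s)), ∏ i : Fin s,
          (w (σ (slL s m i)) (f i) * sg k (m+s) (f i)
            * w (σ (slR s m i)) (pr (m+s) (f i))) := by
    simp only [sympForm_eq]
    exact Fintype.prod_sum _
  have hD : (Matrix.of fun x y : Fin m => w (σ (slE s m y)) (lvE s m x)).det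
      = ∑ τ : Equiv.Perm (Fin m),
          ((Equiv.Perm.sign τ : ℤ) : k) * ∏ j : Fin m, w (σ (slE s m j)) (lvE s m (τ j)) := by
    rw [Matrix.det_apply']
    rfl
  rw [hQ, hD, Finset.sum_mul_sum, Finset.mul_sum]
  refine Finset.sum_congr rfl fun f _ => ?_
  rw [Finset.mul_sum]
  refine Finset.sum_congr rfl fun τ _ => ?_
  have hsplit : ∏ i : Fin s, (w (σ (slL s m i)) (f i) * sg k (m+s) (f i)
        * w (σ (slR s m i)) (pr (m+s) (f i)))
      = (∏ i : Fin s, sg k (m+s) (f i))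
        * ∏ i : Fin s, (w (σ (slL s m i)) (f i) * w (σ (slR s m i)) (pr (m+s) (f i))) := by
    rw [← Finset.prod_mul_distrib]
    exact Finset.prod_congr rfl fun i _ => by ring
  have hprod : ∏ x : Fin (2*s+m), w (σ x) (hh s m f τ x)
      = (∏ i : Fin s, (w (σ (slL s m i)) (f i) * w (σ (slR s m i)) (pr (m+s) (f i))))
        * ∏ j : Fin m, w (σ (slE s m j)) (lvE s m (τ j)) := by
    rw [← Equiv.prod_comp (Xi s m) (fun x => w (σ x) (hh s m f τ x))]
    rw [Fintype.prod_sum_type]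
    congr 1
    · rw [Fintype.prod_prod_type]
      refine Finset.prod_congr rfl fun i _ => ?_
      rw [Fin.prod_univ_two]
      rw [show ((Xi s m) (Sum.inl (i, 0))) = slL s m i from rfl,
        show ((Xi s m) (Sum.inl (i, 1))) = slR s m i from rfl,
        hh_slL, hh_slR]
    · refine Finset.prod_congr rfl fun j _ => ?_
      rw [show ((Xi s m) (Sum.inr j)) = slE s m j from rfl, hh_slE]
  rw [hsplit, hprod]
  ring

lemma stepB (s m : ℕ) (w : Fin (2*s+m) → Fin (2*(m+s)) → k) :
    ∑ σ : Equiv.Perm (Fin (2*s+m)), ((Equiv.Perm.sign σ : ℤ) : k) *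
      ((∏ i : Fin s, sympForm k (m+s) (w (σ (slL s m i))) (w (σ (slR s m i)))) *
       (Matrix.of fun x y : Fin m => w (σ (slE s m y)) (lvE s m x)).det)
    = ∑ f : Fin s → Fin (2*(m+s)), ∑ τ : Equiv.Perm (Fin m),
        ((∏ i : Fin s, sg k (m+s) (f i)) * ((Equiv.Perm.sign τ : ℤ) : k)) *
          (Matrix.of fun u x : Fin (2*s+m) => w u (hh s m f τ x)).det := by
  rw [Finset.sum_congr rfl fun σ _ => stepA s m w σ]
  rw [Finset.sum_comm]
  refine Finset.sum_congr rfl fun f _ => ?_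
  rw [Finset.sum_comm]
  refine Finset.sum_congr rfl fun τ _ => ?_
  rw [← Finset.mul_sum]
  congr 1
  rw [Matrix.det_apply']
  rfl


def Good (s m : ℕ) (f : Fin s → Fin (2*(m+s))) : Prop :=
  (∀ i, m ≤ (f i : ℕ) ∧ (f i : ℕ) < 2*s+m) ∧
  ∀ i j, i ≠ j → (f i : ℕ) ≠ (f j : ℕ) ∧ (f i : ℕ) + (f j : ℕ) ≠ 2*(m+s)-1

lemma bad_det (s m : ℕ) (w : Fin (2*s+m) → Fin (2*(m+s)) → k)
    (f : Fin s → Fin (2*(m+s))) (τ : Equiv.Perm (Fin m)) (hf : ¬ Good s m f) :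
    (Matrix.of fun u x : Fin (2*s+m) => w u (hh s m f τ x)).det = 0 := by
  obtain ⟨z, z', hne, hval⟩ : ∃ z z', z ≠ z' ∧ hh s m f τ z = hh s m f τ z' := by
    by_cases hmid : ∀ i, m ≤ (f i : ℕ) ∧ (f i : ℕ) < 2*s+m
    · have hB : ¬ ∀ i j, i ≠ j → (f i : ℕ) ≠ (f j : ℕ) ∧ (f i : ℕ) + (f j : ℕ) ≠ 2*(m+s)-1 :=
        fun h => hf ⟨hmid, h⟩
      push_neg at hB
      obtain ⟨i, j, hij, hbad⟩ := hB
      rcases (by by_cases heq : (f i : ℕ) = (f j : ℕ)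
                 · exact Or.inl heq
                 · exact Or.inr (hbad heq) :
          (f i : ℕ) = (f j : ℕ) ∨ (f i : ℕ) + (f j : ℕ) = 2*(m+s)-1) with heq | hsum
      · refine ⟨slL s m i, slL s m j, ?_, ?_⟩
        · intro hc
          have h2 := (Xi s m).injective hc
          rw [Sum.inl.injEq, Prod.mk.injEq] at h2
          exact hij (h2.1)
        · rw [hh_slL, hh_slL]; exact Fin.ext heq
      · refine ⟨slR s m i, slL s m j, ?_, ?_⟩
        · intro hc
          have h2 := (Xi s m).injective hc
          rw [Sum.inl.injEq, Prod.mk.injEq] at h2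
          exact absurd h2.2 (by decide)
        · rw [hh_slR, hh_slL]
          have hjlt := (f j).isLt
          refine Fin.ext ?_
          show 2*(m+s)-1-(f i : ℕ) = (f j : ℕ)
          omega
    · push_neg at hmid
      obtain ⟨i, hi⟩ := hmid
      rcases (by by_cases hlow : m ≤ (f i : ℕ)
                 · exact Or.inr (hi hlow)
                 · exact Or.inl (by omega) :
          (f i : ℕ) < m ∨ 2*s+m ≤ (f i : ℕ)) with hlow | hhigh
      · have hlt := (f i).isLt
        refine ⟨slR s m i, slE s m (τ.symm ⟨2*(m+s)-1-(f i : ℕ)-(2*s+m), by omega⟩), ?_, ?_⟩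
        · intro hc
          exact Sum.inl_ne_inr ((Xi s m).injective hc)
        · rw [hh_slR, hh_slE, Equiv.apply_symm_apply]
          refine Fin.ext ?_
          show 2*(m+s)-1-(f i : ℕ) = 2*s+m+(2*(m+s)-1-(f i : ℕ)-(2*s+m))
          omega
      · have hlt := (f i).isLt
        refine ⟨slL s m i, slE s m (τ.symm ⟨(f i : ℕ)-(2*s+m), by omega⟩), ?_, ?_⟩
        · intro hc
          exact Sum.inl_ne_inr ((Xi s m).injective hc)
        · rw [hh_slL, hh_slE, Equiv.apply_symm_apply]
          refine Fin.ext ?_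
          show (f i : ℕ) = 2*s+m+((f i : ℕ)-(2*s+m))
          omega
  refine Matrix.det_zero_of_column_eq hne fun u => ?_
  show w u (hh s m f τ z) = w u (hh s m f τ z')
  rw [hval]

lemma good_det (s m : ℕ) (w : Fin (2*s+m) → Fin (2*(m+s)) → k)
    (β : Equiv.Perm (Fin s)) (ε : Fin s → Bool) (τ : Equiv.Perm (Fin m)) :
    (Matrix.of fun u x : Fin (2*s+m) => w u (hh s m (fB s m β ε) τ x)).det
    = ((Equiv.Perm.sign (gP s β ε) : ℤ) : k) * ((Equiv.Perm.sign τ : ℤ) : k) *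
      (Matrix.of fun u x : Fin (2*s+m) => w u (lv s m x)).det := by
  rw [hh_good]
  have heq : (Matrix.of fun u x : Fin (2*s+m) => w u (lv s m (rho s m β ε τ x)))
      = (Matrix.of fun u x : Fin (2*s+m) => w u (lv s m x)).submatrix id (rho s m β ε τ) := rfl
  rw [heq, Matrix.det_permute']
  have hsign : Equiv.Perm.sign (rho s m β ε τ)
      = Equiv.Perm.sign (gP s β ε) * Equiv.Perm.sign τ := by
    rw [rho, Equiv.Perm.sign_permCongr, Equiv.Perm.sign_sumCongr]
  rw [hsign]
  push_cast
  ring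


lemma good_fB (s m : ℕ) (β : Equiv.Perm (Fin s)) (ε : Fin s → Bool) :
    Good s m (fB s m β ε) := by
  constructor
  · intro i
    have h1 := (β i).isLt
    have hval : (fB s m β ε i : ℕ) = m + (if ε i then 2*s-1-(β i : ℕ) else (β i : ℕ)) := rfl
    rw [hval]
    constructor
    · omega
    · split <;> omega
  · intro i j hij
    have h1 := (β i).isLt
    have h2 := (β j).isLt
    have hne : (β i : ℕ) ≠ (β j : ℕ) := fun hc => hij (β.injective (Fin.ext hc))
    have hvi : (fB s m β ε i : ℕ) = m + (if ε i then 2*s-1-(β i : ℕ) else (β i : ℕ)) := rfl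
    have hvj : (fB s m β ε j : ℕ) = m + (if ε j then 2*s-1-(β j : ℕ) else (β j : ℕ)) := rfl
    by_cases hei : ε i <;> by_cases hej : ε j <;>
      simp only [hei, hej, eq_self_iff_true, Bool.false_eq_true, if_true, if_false] at hvi hvj <;>
      exact ⟨by omega, by omega⟩

def bofFun (s m : ℕ) (f : Fin s → Fin (2*(m+s))) (i : Fin s) : Fin s :=
  ⟨if (f i : ℕ) - m < s then (f i : ℕ) - m else 2*s-1-((f i : ℕ)-m),
    by have := i.isLt; split <;> omega⟩

lemma bof_inj (s m : ℕ) (f : Fin s → Fin (2*(m+s))) (hf : Good s m f) :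
    Function.Injective (bofFun s m f) := by
  intro i j hc
  by_contra hij
  have hbi := hf.1 i
  have hbj := hf.1 j
  have hpij := hf.2 i j hij
  have hval := congrArg Fin.val hc
  simp only [bofFun] at hval
  split at hval <;> split at hval <;> omega

noncomputable def PsiPerm (s m : ℕ) (f : Fin s → Fin (2*(m+s))) (hf : Good s m f) : Equiv.Perm (Fin s) :=
  Equiv.ofBijective _
    ((Fintype.bijective_iff_injective_and_card (bofFun s m f)).mpr ⟨bof_inj s m f hf, rfl⟩)

def PsiBool (s m : ℕ) (f : Fin s → Fin (2*(m+s))) : Fin s → Bool :=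
  fun i => decide (s ≤ (f i : ℕ) - m)

lemma fB_Psi (s m : ℕ) (f : Fin s → Fin (2*(m+s))) (hf : Good s m f) :
    fB s m (PsiPerm s m f hf) (PsiBool s m f) = f := by
  funext i
  have hb := hf.1 i
  refine Fin.ext ?_
  have happ : (PsiPerm s m f hf i : ℕ)
      = (if (f i : ℕ) - m < s then (f i : ℕ) - m else 2*s-1-((f i : ℕ)-m)) := rfl
  have hval : (fB s m (PsiPerm s m f hf) (PsiBool s m f) i : ℕ)
      = m + (if PsiBool s m f i then 2*s-1-(PsiPerm s m f hf i : ℕ)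
          else (PsiPerm s m f hf i : ℕ)) := rfl
  rw [hval, happ]
  by_cases hcase : s ≤ (f i : ℕ) - m
  · rw [if_pos (by simp [PsiBool, hcase]), if_neg (by omega)]
    omega
  · rw [if_neg (by simp [PsiBool, hcase]), if_pos (by omega)]
    omega

lemma Psi_fB_perm (s m : ℕ) (β : Equiv.Perm (Fin s)) (ε : Fin s → Bool) (hg : Good s m (fB s m β ε)) :
    PsiPerm s m (fB s m β ε) hg = β := by
  refine Equiv.ext fun i => ?_
  have h1 := (β i).isLt
  refine Fin.ext ?_
  have hvi : (fB s m β ε i : ℕ) = m + (if ε i then 2*s-1-(β i : ℕ) else (β i : ℕ)) := rfl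
  have happ : (PsiPerm s m (fB s m β ε) hg i : ℕ)
      = (if (fB s m β ε i : ℕ) - m < s then (fB s m β ε i : ℕ) - m
          else 2*s-1-((fB s m β ε i : ℕ)-m)) := rfl
  by_cases hei : ε i <;>
    simp only [hei, eq_self_iff_true, Bool.false_eq_true, if_true, if_false] at hvi <;>
    rw [happ, hvi] <;> split <;> omega

lemma Psi_fB_bool (s m : ℕ) (β : Equiv.Perm (Fin s)) (ε : Fin s → Bool) :
    PsiBool s m (fB s m β ε) = ε := by
  funext i
  have h1 := (β i).isLt
  have hvi : (fB s m β ε i : ℕ) = m + (if ε i then 2*s-1-(β i : ℕ) else (β i : ℕ)) := rfl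
  by_cases hei : ε i <;> simp only [PsiBool, hvi, hei, eq_self_iff_true, Bool.false_eq_true, if_true, if_false]
  · simp only [decide_eq_true_eq]
    omega
  · simp only [decide_eq_false_iff_not]
    omega

lemma coeff_gP (s m : ℕ) (β : Equiv.Perm (Fin s)) (ε : Fin s → Bool) :
    (∏ i : Fin s, sg k (m+s) (fB s m β ε i)) * ((Equiv.Perm.sign (gP s β ε) : ℤ) : k) = 1 := by
  have h1 : (∏ i : Fin s, sg k (m+s) (fB s m β ε i)) = ∏ i : Fin s, (if ε i then (-1:k) else 1) :=
    Finset.prod_congr rfl fun i _ => sg_fB s m β ε i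
  have h2 : ((Equiv.Perm.sign (gP s β ε) : ℤ) : k) = ∏ i : Fin s, (if ε i then (-1:k) else 1) := by
    rw [sign_gP]
    push_cast
    refine Finset.prod_congr rfl fun i _ => ?_
    by_cases hei : ε i <;> simp [hei]
  rw [h1, h2, ← Finset.prod_mul_distrib]
  refine Finset.prod_eq_one fun i _ => ?_
  by_cases hei : ε i <;> simp [hei]

lemma coeff_tau {α : Type*} [Fintype α] [DecidableEq α] (τ : Equiv.Perm α) :
    ((Equiv.Perm.sign τ : ℤ) : k) * ((Equiv.Perm.sign τ : ℤ) : k) = 1 := by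
  rw [← Int.cast_mul, ← Units.val_mul, Int.units_mul_self]
  simp

theorem diamond (s m : ℕ) (w : Fin (2*s+m) → Fin (2*(m+s)) → k) :
    (∑ σ : Equiv.Perm (Fin (2*s+m)), ((Equiv.Perm.sign σ : ℤ) : k) *
      ((∏ i : Fin s, sympForm k (m+s) (w (σ (slL s m i))) (w (σ (slR s m i)))) *
       (Matrix.of fun x y : Fin m => w (σ (slE s m y)) (lvE s m x)).det))
    = ((s.factorial * 2^s * m.factorial : ℕ) : k) *
      (Matrix.of fun u x : Fin (2*s+m) => w u (lv s m x)).det := by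
  classical
  rw [stepB]
  have hzero : ∀ f, ¬ Good s m f →
      (∑ τ : Equiv.Perm (Fin m),
        ((∏ i : Fin s, sg k (m+s) (f i)) * ((Equiv.Perm.sign τ : ℤ) : k)) *
          (Matrix.of fun u x : Fin (2*s+m) => w u (hh s m f τ x)).det) = 0 :=
    fun f hg => Finset.sum_eq_zero fun τ _ => by rw [bad_det s m w f τ hg, mul_zero]
  rw [← Finset.sum_filter_of_ne (fun f _ hne => by_contra fun hg => hne (hzero f hg))]
  have hbij : (∑ f ∈ Finset.univ.filter (Good s m),
      ∑ τ : Equiv.Perm (Fin m),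
        ((∏ i : Fin s, sg k (m+s) (f i)) * ((Equiv.Perm.sign τ : ℤ) : k)) *
          (Matrix.of fun u x : Fin (2*s+m) => w u (hh s m f τ x)).det)
      = ∑ be : Equiv.Perm (Fin s) × (Fin s → Bool),
          ∑ τ : Equiv.Perm (Fin m),
            ((∏ i : Fin s, sg k (m+s) (fB s m be.1 be.2 i)) * ((Equiv.Perm.sign τ : ℤ) : k)) *
              (Matrix.of fun u x : Fin (2*s+m) => w u (hh s m (fB s m be.1 be.2) τ x)).det := by
    refine Finset.sum_bij'
      (fun f hf => ((PsiPerm s m f (Finset.mem_filter.mp hf).2, PsiBool s m f) :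
          Equiv.Perm (Fin s) × (Fin s → Bool)))
      (fun be _ => fB s m be.1 be.2)
      (fun f hf => Finset.mem_univ _)
      (fun be _ => Finset.mem_filter.mpr ⟨Finset.mem_univ _, good_fB s m be.1 be.2⟩)
      (fun f hf => fB_Psi s m f (Finset.mem_filter.mp hf).2)
      (fun be hbe => ?_) (fun f hf => ?_)
    · obtain ⟨β, ε⟩ := be
      refine Prod.ext ?_ ?_
      · exact Psi_fB_perm s m β ε (good_fB s m β ε)
      · exact Psi_fB_bool s m β ε
    · rw [fB_Psi s m f (Finset.mem_filter.mp hf).2]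
  rw [hbij]
  have hterm : ∀ (β : Equiv.Perm (Fin s)) (ε : Fin s → Bool) (τ : Equiv.Perm (Fin m)),
      ((∏ i : Fin s, sg k (m+s) (fB s m β ε i)) * ((Equiv.Perm.sign τ : ℤ) : k)) *
        (Matrix.of fun u x : Fin (2*s+m) => w u (hh s m (fB s m β ε) τ x)).det
      = (Matrix.of fun u x : Fin (2*s+m) => w u (lv s m x)).det := by
    intro β ε τ
    rw [good_det]
    have hre : ((∏ i : Fin s, sg k (m+s) (fB s m β ε i)) * ((Equiv.Perm.sign τ : ℤ) : k)) *
        (((Equiv.Perm.sign (gP s β ε) : ℤ) : k) * ((Equiv.Perm.sign τ : ℤ) : k) *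
          (Matrix.of fun u x : Fin (2*s+m) => w u (lv s m x)).det)
        = ((∏ i : Fin s, sg k (m+s) (fB s m β ε i)) * ((Equiv.Perm.sign (gP s β ε) : ℤ) : k)) *
          ((((Equiv.Perm.sign τ : ℤ) : k) * ((Equiv.Perm.sign τ : ℤ) : k)) *
            (Matrix.of fun u x : Fin (2*s+m) => w u (lv s m x)).det) := by ring
    rw [hre, coeff_gP, coeff_tau]
    simp
  calc (∑ be : Equiv.Perm (Fin s) × (Fin s → Bool),
          ∑ τ : Equiv.Perm (Fin m),
            ((∏ i : Fin s, sg k (m+s) (fB s m be.1 be.2 i)) * ((Equiv.Perm.sign τ : ℤ) : k)) *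
              (Matrix.of fun u x : Fin (2*s+m) => w u (hh s m (fB s m be.1 be.2) τ x)).det)
      = ∑ be : Equiv.Perm (Fin s) × (Fin s → Bool), ∑ _τ : Equiv.Perm (Fin m),
          (Matrix.of fun u x : Fin (2*s+m) => w u (lv s m x)).det :=
        Finset.sum_congr rfl fun be _ => Finset.sum_congr rfl fun τ _ => hterm be.1 be.2 τ
    _ = ((s.factorial * 2^s * m.factorial : ℕ) : k) *
        (Matrix.of fun u x : Fin (2*s+m) => w u (lv s m x)).det := by
      rw [Finset.sum_const, Finset.sum_const, Finset.card_univ, Finset.card_univ, smul_smul,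
        nsmul_eq_mul]
      congr 2 <;>
        rw [Fintype.card_prod, Fintype.card_perm, Fintype.card_perm, Fintype.card_fun,
          Fintype.card_fin, Fintype.card_fin, Fintype.card_bool]


abbrev genT (l r : ℕ) : Type :=
  {q : Fin l × Fin l // q.1 < q.2} ⊕ ((d : Fin r) × (Fin ((d : ℕ) + 1) → Fin l))

noncomputable def Xpair (l r : ℕ) (k : Type*) [Field k] (a b : Fin l) : MvPolynomial (genT l r) k :=
  if h : a < b then MvPolynomial.X (Sum.inl ⟨(a, b), h⟩)
  else if h' : b < a then - MvPolynomial.X (Sum.inl ⟨(b, a), h'⟩) else 0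

lemma eval_Xpair (l r : ℕ) (v : Fin l → Fin (2 * r) → k)
    (g2 : ((d : Fin r) × (Fin ((d : ℕ) + 1) → Fin l)) → k) (a b : Fin l) (hab : a ≠ b) :
    MvPolynomial.eval
      (Sum.elim (fun q : {q : Fin l × Fin l // q.1 < q.2} => sympForm k r (v q.1.1) (v q.1.2)) g2)
      (Xpair l r k a b) = sympForm k r (v a) (v b) := by
  rcases lt_trichotomy a b with h | h | h
  · rw [Xpair, dif_pos h, MvPolynomial.eval_X, Sum.elim_inl]
  · exact absurd h hab
  · rw [Xpair, dif_neg (lt_asymm h), dif_pos h, map_neg, MvPolynomial.eval_X, Sum.elim_inl]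
    exact (sympForm_swap k r (v a) (v b)).symm

noncomputable def XD (l s m : ℕ) (k : Type*) [Field k] (hs : 1 ≤ s)
    (cols : Fin (2*s+m) → Fin l) (σ : Equiv.Perm (Fin (2*s+m))) :
    MvPolynomial (genT l (m+s)) k :=
  if hm : 0 < m then
    MvPolynomial.X (Sum.inr ⟨⟨m-1, by omega⟩,
      fun j : Fin (m-1+1) => cols (σ (slE s m ⟨(j : ℕ), by have := j.isLt; omega⟩))⟩)
  else 1

lemma eval_XD (l s m : ℕ) (hs : 1 ≤ s) (cols : Fin (2*s+m) → Fin l)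
    (v : Fin l → Fin (2 * (m+s)) → k)
    (g1 : {q : Fin l × Fin l // q.1 < q.2} → k) (σ : Equiv.Perm (Fin (2*s+m))) :
    MvPolynomial.eval
      (Sum.elim g1 (fun dc : ((d : Fin (m+s)) × (Fin ((d : ℕ) + 1) → Fin l)) =>
        lowerMinor k (m+s) l ((dc.1 : ℕ) + 1) (by have := dc.1.isLt; omega) dc.2 v))
      (XD l s m k hs cols σ)
    = (Matrix.of fun x y : Fin m => v (cols (σ (slE s m y))) (lvE s m x)).det := by
  by_cases hm : 0 < m
  · rw [XD, dif_pos hm, MvPolynomial.eval_X, Sum.elim_inr]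
    show lowerMinor k (m+s) l (m-1+1) _ _ v = _
    unfold lowerMinor
    have hmm : m-1+1 = m := by omega
    rw [← Matrix.det_submatrix_equiv_self (finCongr hmm)
      (Matrix.of fun x y : Fin m => v (cols (σ (slE s m y))) (lvE s m x))]
    congr 1
    refine Matrix.ext fun x y => ?_
    show v (cols (σ (slE s m ⟨((y : ℕ)), _⟩))) ⟨2*(m+s)-(m-1+1)+(x : ℕ), _⟩
        = v (cols (σ (slE s m (finCongr hmm y)))) (lvE s m (finCongr hmm x))
    have h1 : (⟨((y : ℕ)), by have := y.isLt; omega⟩ : Fin m) = finCongr hmm y :=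
      Fin.ext (by simp)
    have h2 : (⟨2*(m+s)-(m-1+1)+(x : ℕ), by have := x.isLt; omega⟩ : Fin (2*(m+s)))
        = lvE s m (finCongr hmm x) := by
      refine Fin.ext ?_
      show 2*(m+s)-(m-1+1)+(x : ℕ) = 2*s+m+((finCongr hmm x : Fin m) : ℕ)
      simp
      omega
    rw [h1, h2]
  · rw [XD, dif_neg hm]
    haveI : IsEmpty (Fin m) := ⟨fun j => absurd j.isLt (by omega)⟩
    rw [map_one, Matrix.det_isEmpty]

end Stmt13Aux

/-- for the symplectic group, every lower minor of order `p` with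
`r < p ≤ min(l, 2r)` is a polynomial in the pairings `Q(vᵢ, vⱼ)` (`i < j`) and the
lower minors of order at most `r`. -/
theorem stmt13 (k : Type*) [Field k] [CharZero k] (r : ℕ) (hr : 1 ≤ r)
    (l : ℕ) (hl : 1 ≤ l) (p : ℕ) (hp1 : r < p) (hp2 : p ≤ l) (hp3 : p ≤ 2 * r)
    (cols : Fin p → Fin l) (hcols : Function.Injective cols) :
    ∃ P : MvPolynomial
        ({q : Fin l × Fin l // q.1 < q.2} ⊕ ((d : Fin r) × (Fin ((d : ℕ) + 1) → Fin l))) k,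
      ∀ v : Fin l → Fin (2 * r) → k,
        lowerMinor k r l p hp3 cols v =
          MvPolynomial.eval
            (Sum.elim
              (fun q => sympForm k r (v q.1.1) (v q.1.2))
              (fun dc => lowerMinor k r l ((dc.1 : ℕ) + 1)
                (by have := dc.1.isLt; omega) dc.2 v))
            P := by
  classical
  obtain ⟨s, m, hs, hpm, hrm⟩ : ∃ s m : ℕ, 1 ≤ s ∧ p = 2*s+m ∧ r = m+s :=
    ⟨p - r, 2*r - p, by omega, by omega, by omega⟩
  subst hpm
  subst hrm
  open Stmt13Aux in
  refine ⟨MvPolynomial.C (((s.factorial * 2^s * m.factorial : ℕ) : k))⁻¹ *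
    ∑ σ : Equiv.Perm (Fin (2*s+m)), MvPolynomial.C ((Equiv.Perm.sign σ : ℤ) : k) *
      ((∏ i : Fin s, Xpair l (m+s) k (cols (σ (slL s m i))) (cols (σ (slR s m i)))) *
        XD l s m k hs cols σ), fun v => ?_⟩
  have hc0 : ((s.factorial * 2^s * m.factorial : ℕ) : k) ≠ 0 :=
    Nat.cast_ne_zero.mpr
      (Nat.mul_pos (Nat.mul_pos s.factorial_pos (Nat.two_pow_pos s)) m.factorial_pos).ne'
  have hrhs : MvPolynomial.eval
      (Sum.elim
        (fun q : {q : Fin l × Fin l // q.1 < q.2} => sympForm k (m+s) (v q.1.1) (v q.1.2))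
        (fun dc : ((d : Fin (m+s)) × (Fin ((d : ℕ) + 1) → Fin l)) =>
          lowerMinor k (m+s) l ((dc.1 : ℕ) + 1) (by have := dc.1.isLt; omega) dc.2 v))
      (MvPolynomial.C (((s.factorial * 2^s * m.factorial : ℕ) : k))⁻¹ *
        ∑ σ : Equiv.Perm (Fin (2*s+m)), MvPolynomial.C ((Equiv.Perm.sign σ : ℤ) : k) *
          ((∏ i : Fin s, Xpair l (m+s) k (cols (σ (slL s m i))) (cols (σ (slR s m i)))) *
            XD l s m k hs cols σ))
      = (((s.factorial * 2^s * m.factorial : ℕ) : k))⁻¹ *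
        ∑ σ : Equiv.Perm (Fin (2*s+m)), ((Equiv.Perm.sign σ : ℤ) : k) *
          ((∏ i : Fin s, sympForm k (m+s) (v (cols (σ (slL s m i)))) (v (cols (σ (slR s m i)))))
            * (Matrix.of fun x y : Fin m => v (cols (σ (slE s m y))) (lvE s m x)).det) := by
    rw [map_mul, MvPolynomial.eval_C, map_sum]
    congr 1
    refine Finset.sum_congr rfl fun σ _ => ?_
    have hab : ∀ i : Fin s, cols (σ (slL s m i)) ≠ cols (σ (slR s m i)) := by
      intro i hc
      have h2 := σ.injective (hcols hc)
      have h3 := (Xi s m).injective h2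
      rw [Sum.inl.injEq, Prod.mk.injEq] at h3
      exact absurd h3.2 (by decide)
    rw [map_mul, MvPolynomial.eval_C, map_mul, eval_XD, map_prod]
    rw [Finset.prod_congr rfl fun i _ => eval_Xpair l (m+s) v _ _ _ (hab i)]
  rw [hrhs]
  have hd := diamond (k := k) s m (fun j => v (cols j))
  rw [hd, ← mul_assoc, inv_mul_cancel₀ hc0, one_mul]
  unfold lowerMinor
  rw [← Matrix.det_transpose (Matrix.of fun u x : Fin (2*s+m) => v (cols u) (lv s m x))]
  congr 1
  refine Matrix.ext fun x y => ?_
  show v (cols y) ⟨2*(m+s)-(2*s+m)+(x : ℕ), _⟩ = v (cols y) (lv s m x)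
  have harg : (⟨2*(m+s)-(2*s+m)+(x : ℕ), by have := x.isLt; omega⟩ : Fin (2*(m+s)))
      = lv s m x := Fin.ext (by simp [Stmt13Aux.lv]; omega)
  rw [harg]
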